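/- The deterministic fragment of Kleene algebra without tests is generated by sequential composition together with the constants true and false: every KA expression e whose guarded language L(e) is deterministic is language-equivalent to either false (empty language), true (the language At), or a finite product p₁·p₂·...·p_n of atomic actions. Equivalently, if the regular language over Σ of a regular expression e contains two distinct strings, then its guarded language L(e) is not deterministic. -/

import Mathlib

/-- A guarded string candidate: a list of atoms (sets of tests) and actions. -/
abbrev GList (A T : Type) := List (Set T ⊕ A)

/-- Guarded strings: nonempty alternating sequences starting and ending with an atom. -/
inductive IsGuarded {A T : Type} : GList A T → Prop
  | single (α : Set T) : IsGuarded [Sum.inl α]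
  | cons (α : Set T) (p : A) {l : GList A T} : IsGuarded l →
      IsGuarded (Sum.inl α :: Sum.inr p :: l)

/-- Guarded composition of guarded languages: fuse matching boundary atoms. -/
def gcomp {A T : Type} (L K : Set (GList A T)) : Set (GList A T) :=
  { z | ∃ (w : GList A T) (α : Set T) (x : GList A T),
      w ++ [Sum.inl α] ∈ L ∧ Sum.inl α :: x ∈ K ∧ z = w ++ Sum.inl α :: x }

/-- The language of all length-one guarded strings (all atoms). -/
def atomsLang {A T : Type} : Set (GList A T) := { w | ∃ α : Set T, w = [Sum.inl α] }

/-- Iterated guarded composition. -/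
def gpow {A T : Type} (L : Set (GList A T)) : ℕ → Set (GList A T)
  | 0 => atomsLang
  | n + 1 => gcomp L (gpow L n)

/-- Guarded star. -/
def gstar {A T : Type} (L : Set (GList A T)) : Set (GList A T) := ⋃ n, gpow L n

/-- Boolean (test) expressions over test variables T. -/
inductive BExp (T : Type) where
  | tru : BExp T
  | fls : BExp T
  | var (t : T) : BExp T
  | or (b c : BExp T) : BExp T
  | and (b c : BExp T) : BExp T
  | not (b : BExp T) : BExp T

/-- Satisfaction of a test by an atom (truth assignment). -/
def BExp.holds {T : Type} (α : Set T) : BExp T → Prop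
  | .tru => True
  | .fls => False
  | .var t => t ∈ α
  | .or b c => BExp.holds α b ∨ BExp.holds α c
  | .and b c => BExp.holds α b ∧ BExp.holds α c
  | .not b => ¬ BExp.holds α b

/-- The guarded language of a test. -/
def testLang {A T : Type} (b : BExp T) : Set (GList A T) :=
  { w | ∃ α : Set T, b.holds α ∧ w = [Sum.inl α] }

/-- KAT expressions over actions A and tests T. -/
inductive KExp (A T : Type) where
  | test (b : BExp T) : KExp A T
  | act (p : A) : KExp A T
  | plus (e f : KExp A T) : KExp A T
  | seq (e f : KExp A T) : KExp A T
  | star (e : KExp A T) : KExp A T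

/-- Language semantics of KAT. -/
def lang {A T : Type} : KExp A T → Set (GList A T)
  | .test b => testLang b
  | .act p => { w | ∃ α β : Set T, w = [Sum.inl α, Sum.inr p, Sum.inl β] }
  | .plus e f => lang e ∪ lang f
  | .seq e f => gcomp (lang e) (lang f)
  | .star e => gstar (lang e)

/-- Semantics of a test under a valuation τ on states S. -/
def bsem {T S : Type} (τ : T → Set S) : BExp T → Set S
  | .tru => Set.univ
  | .fls => ∅
  | .var t => τ t
  | .or b c => bsem τ b ∪ bsem τ c
  | .and b c => bsem τ b ∩ bsem τ c
  | .not b => (bsem τ b)ᶜ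

/-- Relational semantics of KAT under an interpretation (S, τ, σ). -/
def rsem {A T S : Type} (τ : T → Set S) (σ : A → S → S → Prop) : KExp A T → S → S → Prop
  | .test b => fun s s' => s = s' ∧ s ∈ bsem τ b
  | .act p => σ p
  | .plus e f => fun s s' => rsem τ σ e s s' ∨ rsem τ σ f s s'
  | .seq e f => fun s s' => ∃ s'', rsem τ σ e s s'' ∧ rsem τ σ f s'' s'
  | .star e => Relation.ReflTransGen (rsem τ σ e)

/-- A relation is a partial function. -/
def Functional {S : Type} (r : S → S → Prop) : Prop :=
  ∀ s s₁ s₂, r s s₁ → r s s₂ → s₁ = s₂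

/-- A KAT expression is deterministic: it maps functional interpretations to functional relations. -/
def DetExp {A T : Type} (e : KExp A T) : Prop :=
  ∀ (S : Type) (τ : T → Set S) (σ : A → S → S → Prop),
    (∀ p, Functional (σ p)) → Functional (rsem τ σ e)

/-- A guarded language is deterministic: no member is a proper prefix of another, and
any two distinct members first differ at an atom. -/
def DetLang {A T : Type} (L : Set (GList A T)) : Prop :=
  ∀ w ∈ L, ∀ x ∈ L, w ≠ x →
    ∃ (l w' x' : GList A T) (α β : Set T), α ≠ β ∧
      w = l ++ Sum.inl α :: w' ∧ x = l ++ Sum.inl β :: x'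

/-- The atom of a state: the set of tests true at it. -/
def atomOf {T S : Type} (τ : T → Set S) (s : S) : Set T := { t | s ∈ τ t }

/-- Labeled paths in an interpretation, together with their induced guarded strings. -/
inductive IsPath {A T S : Type} (τ : T → Set S) (σ : A → S → S → Prop) :
    S → GList A T → S → Prop
  | nil (s : S) : IsPath τ σ s [Sum.inl (atomOf τ s)] s
  | cons {s s' s'' : S} {p : A} {w : GList A T} :
      σ p s s' → IsPath τ σ s' w s'' →
      IsPath τ σ s (Sum.inl (atomOf τ s) :: Sum.inr p :: w) s''

/-- GKAT expressions. -/
inductive GExp (A T : Type) where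
  | assert (b : BExp T) : GExp A T
  | act (p : A) : GExp A T
  | seq (e f : GExp A T) : GExp A T
  | ite (b : BExp T) (e f : GExp A T) : GExp A T
  | whl (b : BExp T) (e : GExp A T) : GExp A T

/-- Language semantics of GKAT. -/
def glang {A T : Type} : GExp A T → Set (GList A T)
  | .assert b => testLang b
  | .act p => { w | ∃ α β : Set T, w = [Sum.inl α, Sum.inr p, Sum.inl β] }
  | .seq e f => gcomp (glang e) (glang f)
  | .ite b e f => gcomp (testLang b) (glang e) ∪ gcomp (testLang b.not) (glang f)
  | .whl b e => gcomp (gstar (gcomp (testLang b) (glang e))) (testLang b.not)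

/-- Output of a deterministic KAT automaton on a state and atom. -/
inductive Out (A Q : Type) where
  | accept : Out A Q
  | reject : Out A Q
  | step (p : A) (q : Q) : Out A Q

/-- Acceptance in a deterministic KAT automaton with transition function δ,
starting from dynamics γ. -/
inductive AccFrom {A T Q : Type} (δ : Q → Set T → Out A Q) :
    (Set T → Out A Q) → GList A T → Prop
  | accept {γ : Set T → Out A Q} {α : Set T} :
      γ α = Out.accept → AccFrom δ γ [Sum.inl α]
  | step {γ : Set T → Out A Q} {α : Set T} {p : A} {q : Q} {w : GList A T} :
      γ α = Out.step p q → AccFrom δ (δ q) w →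
      AccFrom δ γ (Sum.inl α :: Sum.inr p :: w)

/-- Brzozowski derivative of a language with respect to a word. -/
def dl {A T : Type} (L : Set (GList A T)) (u : GList A T) : Set (GList A T) :=
  { x | u ++ x ∈ L }

/-- An atom β over T₁ is 𝔱-consistent with an atom α over T₀. -/
def TConsistent {T₀ T₁ : Type} (𝔱 : T₀ → BExp T₁) (α : Set T₀) (β : Set T₁) : Prop :=
  ∀ t, t ∈ α ↔ (𝔱 t).holds β

/-- Atom-replacement relation induced by a test substitution 𝔱. -/
inductive TRel {A T₀ T₁ : Type} (𝔱 : T₀ → BExp T₁) : GList A T₀ → GList A T₁ → Prop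
  | nil : TRel 𝔱 [] []
  | atom {α : Set T₀} {β : Set T₁} {w : GList A T₀} {x : GList A T₁} :
      TConsistent 𝔱 α β → TRel 𝔱 w x → TRel 𝔱 (Sum.inl α :: w) (Sum.inl β :: x)
  | act {p : A} {w : GList A T₀} {x : GList A T₁} :
      TRel 𝔱 w x → TRel 𝔱 (Sum.inr p :: w) (Sum.inr p :: x)

/-- apply_𝔱 on guarded languages. -/
def applyT {A T₀ T₁ : Type} (𝔱 : T₀ → BExp T₁) (L : Set (GList A T₀)) : Set (GList A T₁) :=
  { x | ∃ w ∈ L, TRel 𝔱 w x }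

/-- Action-replacement relation induced by an action substitution 𝔰: each action is
replaced by a guarded string of 𝔰(p), fused with the surrounding atoms. -/
inductive SRel {A₀ A₁ T : Type} (𝔰 : A₀ → Set (GList A₁ T)) :
    GList A₀ T → GList A₁ T → Prop
  | single (α : Set T) : SRel 𝔰 [Sum.inl α] [Sum.inl α]
  | step {α β : Set T} {p : A₀} {u : GList A₁ T} {w : GList A₀ T} {x : GList A₁ T} :
      Sum.inl α :: u ++ [Sum.inl β] ∈ 𝔰 p →
      SRel 𝔰 (Sum.inl β :: w) (Sum.inl β :: x) →
      SRel 𝔰 (Sum.inl α :: Sum.inr p :: Sum.inl β :: w) (Sum.inl α :: u ++ Sum.inl β :: x)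

/-- apply^𝔰 on guarded languages. -/
def applyS {A₀ A₁ T : Type} (𝔰 : A₀ → Set (GList A₁ T)) (L : Set (GList A₀ T)) :
    Set (GList A₁ T) :=
  { x | ∃ w ∈ L, SRel 𝔰 w x }

/-- Builder for the guarded strings of the language L_k. -/
def buildLk {k : ℕ} : Fin k → Fin k → List (Fin k) → GList (Fin k) (Fin k)
  | cur, act, [] => [Sum.inl {cur}, Sum.inr act, Sum.inl {cur}]
  | cur, act, j :: rest => Sum.inl {cur} :: Sum.inr act :: buildLk j cur rest

/-- The language L_k of Definition 6.2. -/
def Lk (k : ℕ) (hk : 0 < k) : Set (GList (Fin k) (Fin k)) :=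
  { w | ∃ (i : Fin k) (rest : List (Fin k)),
      i ≠ ⟨0, hk⟩ ∧ List.Chain' (· ≠ ·) (i :: rest) ∧ w = buildLk i ⟨0, hk⟩ rest }

/-- k-density of a deterministic KAT automaton transition function. -/
def KDense {A T Q : Type} (δ : Q → Set T → Out A Q) (k : ℕ) : Prop :=
  ∃ (S : Fin k → Set Q) (α : Fin k → Set T) (pa : Q → Fin k → A),
    Function.Injective α ∧
    (∀ i, (S i).Nonempty) ∧
    (∀ i q, q ∈ S i → δ q (α i) = Out.accept) ∧
    (∀ i j q, i ≠ j → q ∈ S i → ∃ q' ∈ S j, δ q (α j) = Out.step (pa q j) q') ∧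
    (∀ i j m q q', q ∈ S i → q' ∈ S j → pa q m = pa q' m → i = j)

/-- The sequence of actions occurring in a guarded string. -/
def actsOf {A T : Type} (w : GList A T) : List A :=
  w.filterMap (fun x => match x with | .inl _ => none | .inr p => some p)

/-- The guarded language of a word over Σ: all guarded strings with that action sequence. -/
def wordLang {A T : Type} (ps : List A) : Set (GList A T) :=
  { w | IsGuarded w ∧ actsOf w = ps }

/-- Test expressions without test variables. -/
def BExp.varFree {T : Type} : BExp T → Prop
  | .tru => True
  | .fls => True
  | .var _ => False
  | .or b c => BExp.varFree b ∧ BExp.varFree c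
  | .and b c => BExp.varFree b ∧ BExp.varFree c
  | .not b => BExp.varFree b

/-- KA expressions: KAT expressions with no test variables. -/
def KExp.testFree {A T : Type} : KExp A T → Prop
  | .test b => b.varFree
  | .act _ => True
  | .plus e f => KExp.testFree e ∧ KExp.testFree f
  | .seq e f => KExp.testFree e ∧ KExp.testFree f
  | .star e => KExp.testFree e

section Aux

variable {A T : Type}

lemma actsOf_append (a b : GList A T) : actsOf (a ++ b) = actsOf a ++ actsOf b :=
  List.filterMap_append

@[simp] lemma actsOf_inl_cons (α : Set T) (w : GList A T) :
    actsOf (Sum.inl α :: w) = actsOf w := rfl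

@[simp] lemma actsOf_inr_cons (p : A) (w : GList A T) :
    actsOf (Sum.inr p :: w) = p :: actsOf w := rfl

@[simp] lemma actsOf_nil : actsOf ([] : GList A T) = [] := rfl

lemma guarded_acts_nil {x : GList A T} (hx : IsGuarded x) (h : actsOf x = []) :
    ∃ β : Set T, x = [Sum.inl β] := by
  cases hx with
  | single β => exact ⟨β, rfl⟩
  | cons α p hl => simp at h

lemma guarded_head {x : GList A T} (hx : IsGuarded x) :
    ∃ (β : Set T) (v : GList A T), x = Sum.inl β :: v := by
  cases hx with
  | single β => exact ⟨β, [], rfl⟩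
  | cons α p hl => exact ⟨α, _, rfl⟩

/-- Concatenation of guarded strings that agree on the fused atom. -/
lemma guarded_cat : ∀ {y : GList A T}, IsGuarded y →
    ∀ (u : GList A T) (α : Set T) (v : GList A T), y = u ++ [Sum.inl α] →
    IsGuarded (Sum.inl α :: v) → IsGuarded (u ++ Sum.inl α :: v) := by
  intro y hy
  induction hy with
  | single β =>
    intro u α v hu hv
    match u, hu with
    | [], hu =>
      simp only [List.nil_append, List.cons.injEq] at hu
      obtain ⟨h1, -⟩ := hu
      cases h1
      exact hv
    | z :: u', hu => simp at hu
  | cons β p hl ih =>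
    intro u α v hu hv
    match u, hu with
    | [], hu => simp at hu
    | [z], hu => simp at hu
    | z1 :: z2 :: u', hu =>
      simp only [List.cons_append, List.cons.injEq] at hu
      obtain ⟨h1, h2, h3⟩ := hu
      cases h1; cases h2
      exact IsGuarded.cons β p (ih u' α v h3 hv)

/-- Splitting a guarded string by a decomposition of its action sequence. -/
lemma guarded_split : ∀ (ps : List A) {x : GList A T} (qs : List A),
    IsGuarded x → actsOf x = ps ++ qs →
    ∃ (u : GList A T) (γ : Set T) (v : GList A T),
      x = u ++ Sum.inl γ :: v ∧ IsGuarded (u ++ [Sum.inl γ]) ∧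
      actsOf (u ++ [Sum.inl γ]) = ps ∧ IsGuarded (Sum.inl γ :: v) ∧
      actsOf v = qs := by
  intro ps
  induction ps with
  | nil =>
    intro x qs hx hacts
    obtain ⟨β, v, rfl⟩ := guarded_head hx
    exact ⟨[], β, v, rfl, IsGuarded.single β, rfl, hx, by simpa using hacts⟩
  | cons p ps ih =>
    intro x qs hx hacts
    cases hx with
    | single β => simp at hacts
    | @cons α q l hl =>
      simp only [actsOf_inl_cons, actsOf_inr_cons, List.cons_append,
        List.cons.injEq] at hacts
      obtain ⟨rfl, hacts⟩ := hacts
      obtain ⟨u, γ, v, rfl, hg1, hg2, hg3, hg4⟩ := ih qs hl hacts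
      refine ⟨Sum.inl α :: Sum.inr q :: u, γ, v, rfl,
        IsGuarded.cons α q hg1, by simpa using hg2, hg3, hg4⟩

lemma gcomp_guarded {L K : Set (GList A T)}
    (hL : ∀ w ∈ L, IsGuarded w) (hK : ∀ w ∈ K, IsGuarded w) :
    ∀ w ∈ gcomp L K, IsGuarded w := by
  rintro w ⟨u, α, v, hu, hv, rfl⟩
  exact guarded_cat (hL _ hu) u α v rfl (hK _ hv)

lemma gpow_guarded {L : Set (GList A T)} (hL : ∀ w ∈ L, IsGuarded w) :
    ∀ n, ∀ w ∈ gpow L n, IsGuarded w := by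
  intro n
  induction n with
  | zero => rintro w ⟨α, rfl⟩; exact IsGuarded.single α
  | succ n ih => exact gcomp_guarded hL ih

lemma lang_guarded : ∀ (e : KExp A T), ∀ w ∈ lang e, IsGuarded w := by
  intro e
  induction e with
  | test b => rintro w ⟨α, -, rfl⟩; exact IsGuarded.single α
  | act p => rintro w ⟨α, β, rfl⟩; exact IsGuarded.cons α p (IsGuarded.single β)
  | plus e f ihe ihf => rintro w (hw | hw); exacts [ihe w hw, ihf w hw]
  | seq e f ihe ihf => exact gcomp_guarded ihe ihf
  | star e ih =>
    rintro w ⟨_, ⟨n, rfl⟩, hw⟩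
    exact gpow_guarded ih n w hw

lemma varFree_holds : ∀ (b : BExp T), b.varFree → ∀ α β : Set T,
    (b.holds α ↔ b.holds β) := by
  intro b
  induction b with
  | tru => intro _ α β; simp [BExp.holds]
  | fls => intro _ α β; simp [BExp.holds]
  | var t => intro h; exact absurd h (by simp [BExp.varFree])
  | or b c ihb ihc =>
    intro h α β
    exact or_congr (ihb h.1 α β) (ihc h.2 α β)
  | and b c ihb ihc =>
    intro h α β
    exact and_congr (ihb h.1 α β) (ihc h.2 α β)
  | not b ihb =>
    intro h α β
    exact not_congr (ihb h α β)

lemma gpow_atomIns {L : Set (GList A T)}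
    (hI : ∀ w ∈ L, ∀ x, IsGuarded x → actsOf x = actsOf w → x ∈ L) :
    ∀ n, ∀ w ∈ gpow L n, ∀ x, IsGuarded x → actsOf x = actsOf w → x ∈ gstar L := by
  intro n
  induction n with
  | zero =>
    rintro w ⟨α, rfl⟩ x hx hacts
    obtain ⟨β, rfl⟩ := guarded_acts_nil hx (by simpa using hacts)
    exact ⟨_, ⟨0, rfl⟩, β, rfl⟩
  | succ n ih =>
    rintro w ⟨u, α, v, hu, hv, rfl⟩ x hx hacts
    rw [actsOf_append, actsOf_inl_cons] at hacts
    have hu' : actsOf (u ++ [Sum.inl α]) = actsOf u := by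
      rw [actsOf_append]; simp [actsOf]
    obtain ⟨u', γ, v', rfl, hg1, hg2, hg3, hg4⟩ :=
      guarded_split (actsOf u) (actsOf v) hx hacts
    have h1 : u' ++ [Sum.inl γ] ∈ L := hI _ hu _ hg1 (by rw [hg2, hu'])
    have h2 : Sum.inl γ :: v' ∈ gstar L :=
      ih _ hv _ hg3 (by simpa using hg4)
    obtain ⟨_, ⟨m, rfl⟩, h2⟩ := h2
    exact ⟨_, ⟨m + 1, rfl⟩, u', γ, v', h1, h2, rfl⟩

/-- Atom-insensitivity of test-free expressions. -/
lemma atomIns : ∀ (e : KExp A T), e.testFree →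
    ∀ w ∈ lang e, ∀ x, IsGuarded x → actsOf x = actsOf w → x ∈ lang e := by
  intro e
  induction e with
  | test b =>
    rintro hb w ⟨α, hα, rfl⟩ x hx hacts
    obtain ⟨β, rfl⟩ := guarded_acts_nil hx (by simpa using hacts)
    exact ⟨β, (varFree_holds b hb β α).2 hα, rfl⟩
  | act p =>
    rintro - w ⟨α, β, rfl⟩ x hx hacts
    cases hx with
    | single γ => simp at hacts
    | @cons γ q l hl =>
      simp only [actsOf_inl_cons, actsOf_inr_cons, actsOf_nil,
        List.cons.injEq] at hacts
      obtain ⟨rfl, hacts⟩ := hacts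
      obtain ⟨δ, rfl⟩ := guarded_acts_nil hl hacts
      exact ⟨γ, δ, rfl⟩
  | plus e f ihe ihf =>
    rintro ⟨he, hf⟩ w (hw | hw) x hx hacts
    · exact Or.inl (ihe he w hw x hx hacts)
    · exact Or.inr (ihf hf w hw x hx hacts)
  | seq e f ihe ihf =>
    rintro ⟨he, hf⟩ w ⟨u, α, v, hu, hv, rfl⟩ x hx hacts
    rw [actsOf_append, actsOf_inl_cons] at hacts
    have hu' : actsOf (u ++ [Sum.inl α]) = actsOf u := by
      rw [actsOf_append]; simp [actsOf]
    obtain ⟨u', γ, v', rfl, hg1, hg2, hg3, hg4⟩ :=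
      guarded_split (actsOf u) (actsOf v) hx hacts
    exact ⟨u', γ, v', ihe he _ hu _ hg1 (by rw [hg2, hu']),
      ihf hf _ hv _ hg3 (by simpa using hg4), rfl⟩
  | star e ih =>
    rintro he w ⟨_, ⟨n, rfl⟩, hw⟩ x hx hacts
    exact gpow_atomIns (ih he) n w hw x hx hacts

/-- Replace all atoms by ∅. -/
def normAtoms (w : GList A T) : GList A T :=
  w.map (fun z => match z with | .inl _ => Sum.inl (∅ : Set T) | .inr p => Sum.inr p)

lemma normAtoms_guarded {w : GList A T} (hw : IsGuarded w) :
    IsGuarded (normAtoms w) := by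
  induction hw with
  | single α => exact IsGuarded.single ∅
  | cons α p hl ih => exact IsGuarded.cons ∅ p ih

lemma actsOf_normAtoms (w : GList A T) : actsOf (normAtoms w) = actsOf w := by
  induction w with
  | nil => rfl
  | cons z l ih =>
    cases z with
    | inl α => simpa [normAtoms] using ih
    | inr p => simpa [normAtoms] using ih

lemma normAtoms_atom_empty {w : GList A T} {α : Set T}
    (h : Sum.inl α ∈ normAtoms w) : α = ∅ := by
  rw [normAtoms, List.mem_map] at h
  obtain ⟨z, -, hz⟩ := h
  cases z with
  | inl β => simpa using hz.symm
  | inr p => simp at hz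

end Aux

/-- the deterministic fragment of Kleene algebra without tests is generated
by sequential composition, true and false; equivalently, a test-free expression whose
language contains two strings with different action sequences is not deterministic. -/
theorem ka_det_generated {A T : Type} (e : KExp A T) (he : e.testFree) :
    (DetLang (lang e) → lang e = ∅ ∨ ∃ ps : List A, lang e = wordLang ps) ∧
    (∀ w ∈ lang e, ∀ x ∈ lang e, actsOf w ≠ actsOf x → ¬ DetLang (lang e)) := by
  have part2 : ∀ w ∈ lang e, ∀ x ∈ lang e, actsOf w ≠ actsOf x → ¬ DetLang (lang e) := by
    intro w hw x hx haw hdet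
    have hgw := lang_guarded e w hw
    have hgx := lang_guarded e x hx
    have hw' : normAtoms w ∈ lang e :=
      atomIns e he w hw _ (normAtoms_guarded hgw) (actsOf_normAtoms w)
    have hx' : normAtoms x ∈ lang e :=
      atomIns e he x hx _ (normAtoms_guarded hgx) (actsOf_normAtoms x)
    have hne : normAtoms w ≠ normAtoms x := by
      intro h
      apply haw
      rw [← actsOf_normAtoms w, ← actsOf_normAtoms x, h]
    obtain ⟨l, w', x', α, β, hab, hw2, hx2⟩ := hdet _ hw' _ hx' hne
    have hα : α = ∅ := normAtoms_atom_empty (w := w) (by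
      rw [hw2]; exact List.mem_append_right _ List.mem_cons_self)
    have hβ : β = ∅ := normAtoms_atom_empty (w := x) (by
      rw [hx2]; exact List.mem_append_right _ List.mem_cons_self)
    exact hab (hα.trans hβ.symm)
  refine ⟨?_, part2⟩
  intro hdet
  rcases Set.eq_empty_or_nonempty (lang e) with hemp | ⟨w, hw⟩
  · exact Or.inl hemp
  · refine Or.inr ⟨actsOf w, Set.ext fun x => ⟨?_, ?_⟩⟩
    · intro hx
      refine ⟨lang_guarded e x hx, ?_⟩
      by_contra h
      exact part2 x hx w hw h hdet
    · rintro ⟨hgx, hacts⟩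
      exact atomIns e he w hw x hgx hacts
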